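/- Let R be a Noetherian ring and I an ideal. Suppose the asymptotic resurgence ρ̂(I) := sup{s/r : I^{(st)} ⊄ I^{rt} for all t ≫ 0} is strictly less than the resurgence ρ(I) := sup{s/r : I^{(s)} ⊄ I^r}, and suppose there is an integer b ≥ 1 with closure(I^{r+b}) ⊆ I^r for all r ≥ 1, and the implication: for all positive integers s, m, if I^{(s)} ⊄ closure(I^m) then s/m < ρ̂(I). Then the supremum defining ρ(I) is attained: there exist positive integers s, r with I^{(s)} ⊄ I^r and ρ(I) = s/r. In particular ρ(I) is rational. -/
import Mathlib


/-- The set of elements integral over an ideal `I`. -/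
def intClSet {R : Type*} [CommRing R] (I : Ideal R) : Set R :=
  {f | ∃ k : ℕ, 0 < k ∧ ∃ c : ℕ → R, (∀ i < k, c i ∈ I ^ (i + 1)) ∧
    f ^ k + ∑ i ∈ Finset.range k, c i * f ^ (k - 1 - i) = 0}

/-- The integral closure of an ideal `I` (as an ideal: the span of the set of elements
integral over `I`; this set is in fact already an ideal). -/
def intCl {R : Type*} [CommRing R] (I : Ideal R) : Ideal R :=
  Ideal.span (intClSet I)

/-- The `s`-th symbolic power `I^{(s)} = ⋂_{P ∈ Ass(R/I)} (I^s R_P ∩ R)`. -/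
noncomputable def symbPow {R : Type*} [CommRing R] (I : Ideal R) (s : ℕ) : Ideal R :=
  ⨅ P : {P : Ideal R // IsAssociatedPrime P (R ⧸ I)},
    haveI : P.1.IsPrime := P.2.1
    Ideal.comap (algebraMap R (Localization.AtPrime P.1))
      (Ideal.map (algebraMap R (Localization.AtPrime P.1)) (I ^ s))

/-- If the asymptotic resurgence is strictly smaller than the resurgence, and
`closure(I^{r+b}) ⊆ I^r` for all `r ≥ 1`, and non-containment in integral closures
bounds ratios by the asymptotic resurgence, then the supremum defining the resurgence
is attained; in particular the resurgence is rational. -/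
theorem stmt11 {R : Type*} [CommRing R] [IsNoetherianRing R] (I : Ideal R)
    (ρ ρhat : ℝ)
    (hρ : ρ = sSup {x : ℝ | ∃ s r : ℕ, 0 < s ∧ 0 < r ∧
      ¬ (symbPow I s ≤ I ^ r) ∧ x = (s : ℝ) / r})
    (hρhat : ρhat = sSup {x : ℝ | ∃ s r : ℕ, 0 < s ∧ 0 < r ∧
      (∀ᶠ t in Filter.atTop, ¬ (symbPow I (s * t) ≤ I ^ (r * t))) ∧ x = (s : ℝ) / r})
    (hlt : ρhat < ρ)
    (b : ℕ) (hb : 1 ≤ b)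
    (hcl : ∀ r : ℕ, 1 ≤ r → intCl (I ^ (r + b)) ≤ I ^ r)
    (himp : ∀ s m : ℕ, 0 < s → 0 < m →
      ¬ (symbPow I s ≤ intCl (I ^ m)) → (s : ℝ) / m < ρhat) :
    (∃ s r : ℕ, 0 < s ∧ 0 < r ∧ ¬ (symbPow I s ≤ I ^ r) ∧ ρ = (s : ℝ) / r) ∧
      ∃ q : ℚ, ρ = (q : ℝ) := by
  set S : Set ℝ := {x : ℝ | ∃ s r : ℕ, 0 < s ∧ 0 < r ∧
      ¬ (symbPow I s ≤ I ^ r) ∧ x = (s : ℝ) / r} with hS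
  -- Key estimate: any pair in S satisfies s/(r+b) < ρhat
  have key : ∀ s r : ℕ, 0 < s → 0 < r → ¬ (symbPow I s ≤ I ^ r) →
      (s : ℝ) / ((r : ℝ) + (b : ℝ)) < ρhat := by
    intro s r hs hr hnc
    have hnc' : ¬ (symbPow I s ≤ intCl (I ^ (r + b))) := by
      intro h
      exact hnc (h.trans (hcl r hr))
    have h := himp s (r + b) hs (by omega) hnc'
    push_cast at h
    exact h
  -- S is nonempty
  have hSne : S.Nonempty := by
    by_contra hne
    rw [Set.not_nonempty_iff_eq_empty] at hne
    have hT : {x : ℝ | ∃ s r : ℕ, 0 < s ∧ 0 < r ∧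
        (∀ᶠ t in Filter.atTop, ¬ (symbPow I (s * t) ≤ I ^ (r * t))) ∧ x = (s : ℝ) / r}
        = (∅ : Set ℝ) := by
      ext x
      simp only [Set.mem_setOf_eq, Set.mem_empty_iff_false, iff_false, not_exists]
      intro s r h
      obtain ⟨hs, hr, hev, hx⟩ := h
      obtain ⟨t, hnc, ht⟩ := (hev.and (Filter.eventually_gt_atTop 0)).exists
      have hmem : ((s * t : ℕ) : ℝ) / ((r * t : ℕ) : ℝ) ∈ S :=
        ⟨s * t, r * t, Nat.mul_pos hs ht, Nat.mul_pos hr ht, hnc, rfl⟩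
      rw [hne] at hmem
      exact hmem
    rw [hne, Real.sSup_empty] at hρ
    rw [hT, Real.sSup_empty] at hρhat
    rw [hρ, hρhat] at hlt
    exact lt_irrefl 0 hlt
  obtain ⟨x0, s0, r0, hs0, hr0, hnc0, hx0⟩ := hSne
  have hSne' : S.Nonempty := ⟨x0, s0, r0, hs0, hr0, hnc0, hx0⟩
  have hρhatpos : 0 < ρhat := by
    refine lt_trans ?_ (key s0 r0 hs0 hr0 hnc0)
    have : (0:ℝ) < (s0 : ℝ) := by exact_mod_cast hs0
    have : (0:ℝ) < (r0 : ℝ) + (b : ℝ) := by positivity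
    positivity
  -- S is bounded above by ρhat * (1 + b)
  have hbdd : ∀ x ∈ S, x ≤ ρhat * (1 + (b : ℝ)) := by
    rintro x ⟨s, r, hs, hr, hnc, rfl⟩
    have hk := key s r hs hr hnc
    have hr1 : (1:ℝ) ≤ (r : ℝ) := by exact_mod_cast hr
    have hb1 : (1:ℝ) ≤ (b : ℝ) := by exact_mod_cast hb
    have hs' : (s : ℝ) < ρhat * ((r : ℝ) + (b : ℝ)) := by
      rwa [div_lt_iff₀ (by positivity)] at hk
    rw [div_le_iff₀ (by positivity)]
    nlinarith only [hs', hr1, hb1, hρhatpos, mul_nonneg (mul_nonneg hρhatpos.le (by positivity : (0:ℝ) ≤ (b:ℝ)))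
      (by linarith only [hr1] : (0:ℝ) ≤ (r:ℝ) - 1)]
  have hSbdd : BddAbove S := ⟨ρhat * (1 + (b : ℝ)), hbdd⟩
  clear hnc0 hx0
  have hρpos : 0 < ρ := lt_trans hρhatpos hlt
  -- the cutoff
  set c : ℝ := (ρhat + ρ) / 2 with hc
  have hc1 : ρhat < c := by rw [hc]; linarith
  have hc2 : c < ρ := by rw [hc]; linarith
  have hcpos : 0 < c := lt_trans hρhatpos hc1
  -- bound on r for elements of S above c
  set M : ℝ := ρhat * (b : ℝ) / (c - ρhat) with hM
  have hMpos : 0 < M := by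
    have hb0 : (0:ℝ) < (b:ℝ) := by exact_mod_cast hb
    have : (0:ℝ) < c - ρhat := by linarith
    positivity
  obtain ⟨N, hN⟩ := exists_nat_gt (max M (ρ * M))
  have hNM : M < (N : ℝ) := lt_of_le_of_lt (le_max_left _ _) hN
  have hNρM : ρ * M < (N : ℝ) := lt_of_le_of_lt (le_max_right _ _) hN
  -- the finite candidate set
  set F : Finset ℝ := (Finset.range N ×ˢ Finset.range N).image
    (fun p => ((p.1 : ℕ) : ℝ) / ((p.2 : ℕ) : ℝ)) with hF
  set S' : Set ℝ := S ∩ {x | c < x} with hS'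
  have hsub : S' ⊆ (F : Set ℝ) := by
    rintro x ⟨⟨s, r, hs, hr, hnc, rfl⟩, hxc⟩
    have hxc' : c < (s : ℝ) / (r : ℝ) := hxc
    have hrpos : (0:ℝ) < (r : ℝ) := by exact_mod_cast hr
    have hk := key s r hs hr hnc
    have hs' : (s : ℝ) < ρhat * ((r : ℝ) + (b : ℝ)) := by
      rwa [div_lt_iff₀ (by positivity)] at hk
    have hcr : c * (r : ℝ) < (s : ℝ) := by
      rwa [lt_div_iff₀ hrpos] at hxc'
    -- r < M
    have hrM : (r : ℝ) < M := by
      rw [hM, lt_div_iff₀ (by linarith only [hc1] : (0:ℝ) < c - ρhat)]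
      nlinarith only [hcr, hs']
    -- s/r ≤ ρ
    have hle : (s : ℝ) / (r : ℝ) ≤ ρ := by
      rw [hρ]
      exact le_csSup hSbdd ⟨s, r, hs, hr, hnc, rfl⟩
    have hsρ : (s : ℝ) ≤ ρ * (r : ℝ) := by
      rwa [div_le_iff₀ hrpos] at hle
    have hsN : (s : ℝ) < (N : ℝ) := by
      have h2 : ρ * (r : ℝ) < ρ * M := (mul_lt_mul_iff_right₀ hρpos).mpr hrM
      linarith only [h2, hsρ, hNρM]
    have hrN : (r : ℝ) < (N : ℝ) := lt_trans hrM hNM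
    simp only [hF, Finset.coe_image, Set.mem_image, Finset.mem_coe, Finset.mem_product,
      Finset.mem_range]
    exact ⟨(s, r), ⟨by exact_mod_cast hsN, by exact_mod_cast hrN⟩, rfl⟩
  have hS'fin : S'.Finite := Set.Finite.subset F.finite_toSet hsub
  have hS'ne : S'.Nonempty := by
    obtain ⟨y, hyS, hyc⟩ := exists_lt_of_lt_csSup hSne' (hρ ▸ hc2)
    exact ⟨y, hyS, hyc⟩
  have hmax : sSup S' ∈ S' := Set.Nonempty.csSup_mem hS'ne hS'fin
  have hS'bdd : BddAbove S' := hS'fin.bddAbove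
  -- sSup S = sSup S'
  have heq : sSup S = sSup S' := by
    apply le_antisymm
    · apply csSup_le hSne'
      intro x hx
      by_cases hxc : c < x
      · exact le_csSup hS'bdd ⟨hx, hxc⟩
      · push_neg at hxc
        obtain ⟨y, hyS', hyc⟩ := hS'ne
        have h1 : y ≤ sSup S' := le_csSup hS'bdd ⟨hyS', hyc⟩
        have h2 : c < y := hyc
        linarith only [h1, h2, hxc]
    · exact csSup_le_csSup hSbdd hS'ne (Set.inter_subset_left)
  have hmem : ρ ∈ S := by
    rw [hρ, heq]
    exact hmax.1
  obtain ⟨s, r, hs, hr, hnc, hval⟩ := hmem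
  refine ⟨⟨s, r, hs, hr, hnc, hval⟩, ⟨(s : ℚ) / (r : ℚ), ?_⟩⟩
  rw [hval]
  push_cast
  ring
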